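/- arXiv:1507.05719 — 2 statements merged into one kernel-verified Lean document; each statement's English description precedes it below -/
import Mathlib

section
/- Let H be a complex Hilbert space, S a positive trace class operator on H, and (Sₙ) a sequence of positive operators on H with Sₙ ≤ Sₙ₊₁ ≤ S for all n and ⟨Sₙx, x⟩ → ⟨Sx, x⟩ for every x ∈ H. Then each Sₙ is trace class, trace(S − Sₙ) → 0, and consequently trace(ASₙ) → trace(AS) for every A ∈ B(H). -/
open scoped ComplexOrder
open Filter Topology

noncomputable section

variable {H : Type*} [NormedAddCommGroup H] [InnerProductSpace ℂ H] [CompleteSpace H]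

/-- A bounded operator is Hilbert–Schmidt if `∑ ‖T e‖²` converges for some Hilbert basis. -/
def IsHilbertSchmidt (T : H →L[ℂ] H) : Prop :=
  ∃ (w : Set H) (b : HilbertBasis w ℂ H), Summable fun i => ‖T (b i)‖ ^ 2

/-- A bounded operator is trace class if it is the product of two Hilbert–Schmidt operators. -/
def IsTraceClass (T : H →L[ℂ] H) : Prop :=
  ∃ A B : H →L[ℂ] H, IsHilbertSchmidt A ∧ IsHilbertSchmidt B ∧ T = A * B

/-- The trace of an operator, computed in a fixed Hilbert basis of `H`.  For trace class
operators the value is independent of the choice of basis. -/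
def trace (T : H →L[ℂ] H) : ℂ :=
  ∑' i : (exists_hilbertBasis ℂ H).choose,
    (inner ℂ (T ((exists_hilbertBasis ℂ H).choose_spec.choose i))
      ((exists_hilbertBasis ℂ H).choose_spec.choose i) : ℂ)

/-- The normal functional `f_T : A ↦ trace (A T)` induced by `T`. -/
def traceFunctional (T : H →L[ℂ] H) : (H →L[ℂ] H) → ℂ :=
  fun A => trace (A * T)

/-- A positive linear functional on `B(H)`: a linear map with `f (A⋆A) ≥ 0` for all `A`. -/
def IsPositiveFunctional (f : (H →L[ℂ] H) → ℂ) : Prop :=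
  (∀ A B, f (A + B) = f A + f B) ∧ (∀ (c : ℂ) A, f (c • A) = c * f A) ∧
    ∀ A, 0 ≤ f (star A * A)

/-- `f ≤ g` for functionals: `g - f` is a positive functional. -/
def FunLE (f g : (H →L[ℂ] H) → ℂ) : Prop :=
  IsPositiveFunctional (fun A => g A - f A)

/-- A continuous finite rank operator. -/
def IsFiniteRank (A : H →L[ℂ] H) : Prop :=
  FiniteDimensional ℂ (LinearMap.range (A : H →ₗ[ℂ] H))

/-- A normal positive functional: one of the form `f_S` for a positive trace class `S`. -/
def IsNormalPositiveFunctional (f : (H →L[ℂ] H) → ℂ) : Prop :=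
  ∃ S : H →L[ℂ] H, S.IsPositive ∧ IsTraceClass S ∧ f = traceFunctional S

/-- Ando's absolute continuity for positive operators: `S ≪ T` if `S` is the strong limit of
a monotone increasing sequence of positive operators, each dominated by a multiple of `T`. -/
def OpAbsCont (S T : H →L[ℂ] H) : Prop :=
  ∃ (Sn : ℕ → H →L[ℂ] H) (c : ℕ → ℝ),
    (∀ n, (Sn n).IsPositive) ∧ (∀ n, (Sn (n + 1) - Sn n).IsPositive) ∧
    (∀ n, 0 ≤ c n ∧ ((c n : ℂ) • T - Sn n).IsPositive) ∧
    ∀ x : H, Tendsto (fun n => Sn n x) atTop (nhds (S x))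

/-- `g` is almost dominated by `f`: `g` is the pointwise limit of an increasing sequence of
positive functionals `gₙ ≤ g` with `gₙ ≤ cₙ f`. -/
def AlmostDominated (g f : (H →L[ℂ] H) → ℂ) : Prop :=
  ∃ (gn : ℕ → (H →L[ℂ] H) → ℂ) (c : ℕ → ℝ),
    (∀ n, IsPositiveFunctional (gn n)) ∧ (∀ n, FunLE (gn n) (gn (n + 1))) ∧
    (∀ n, FunLE (gn n) g) ∧ (∀ n, 0 ≤ c n ∧ FunLE (gn n) (fun A => (c n : ℂ) * f A)) ∧
    ∀ A, Tendsto (fun n => gn n A) atTop (nhds (g A))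

/-- Mutual singularity of positive functionals. -/
def MutuallySingularFun (f g : (H →L[ℂ] H) → ℂ) : Prop :=
  ∀ h : (H →L[ℂ] H) → ℂ, IsPositiveFunctional h → FunLE h f → FunLE h g → h = 0

/-- `(g₀, g₁)` is an `f`-Lebesgue decomposition of `g`. -/
def IsLebesgueDecomposition (f g g₀ g₁ : (H →L[ℂ] H) → ℂ) : Prop :=
  IsPositiveFunctional g₀ ∧ IsPositiveFunctional g₁ ∧ (∀ A, g A = g₀ A + g₁ A) ∧
    AlmostDominated g₀ f ∧ MutuallySingularFun g₁ f

set_option maxHeartbeats 1000000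
set_option synthInstance.maxHeartbeats 200000

namespace TraceAux

open ContinuousLinearMap

open scoped NNReal ENNReal

local notation "⟪" x ", " y "⟫" => @inner ℂ _ _ x y

lemma parseval_ennreal {ι : Type*} (b : HilbertBasis ι ℂ H) (x : H) :
    ∑' i, ((‖(⟪x, b i⟫ : ℂ)‖₊ ^ 2 : ℝ≥0) : ℝ≥0∞) = ((‖x‖₊ ^ 2 : ℝ≥0) : ℝ≥0∞) := by
  have h1 : HasSum (fun i => ‖(⟪x, b i⟫ : ℂ)‖ ^ 2) (‖x‖ ^ 2) := by
    have h0 := b.hasSum_inner_mul_inner x x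
    rw [inner_self_eq_norm_sq_to_K] at h0
    rw [← Complex.hasSum_ofReal]
    convert h0 using 1
    · rfl
    · funext i
      rw [← inner_conj_symm (b i) x, RCLike.mul_conj]
      norm_cast
    · norm_cast
  have h2 : HasSum (fun i => (‖(⟪x, b i⟫ : ℂ)‖₊ ^ 2 : ℝ≥0)) (‖x‖₊ ^ 2) := by
    rw [← NNReal.hasSum_coe]
    convert h1 using 1
    · ext i; simp
    · simp
  exact ENNReal.tsum_coe_eq h2

lemma etsum_adjoint {ι κ : Type*} (b : HilbertBasis ι ℂ H) (c : HilbertBasis κ ℂ H)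
    (T : H →L[ℂ] H) :
    ∑' i, ((‖T (b i)‖₊ ^ 2 : ℝ≥0) : ℝ≥0∞) = ∑' j, ((‖adjoint T (c j)‖₊ ^ 2 : ℝ≥0) : ℝ≥0∞) := by
  have key : ∀ (i : ι) (j : κ),
      ‖(⟪T (b i), c j⟫ : ℂ)‖₊ = ‖(⟪adjoint T (c j), b i⟫ : ℂ)‖₊ := by
    intro i j
    rw [← adjoint_inner_right T (b i) (c j), ← inner_conj_symm (b i) (adjoint T (c j)),
      RCLike.nnnorm_conj]
  calc ∑' i, ((‖T (b i)‖₊ ^ 2 : ℝ≥0) : ℝ≥0∞)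
      = ∑' i, ∑' j, ((‖(⟪T (b i), c j⟫ : ℂ)‖₊ ^ 2 : ℝ≥0) : ℝ≥0∞) := by
        simp_rw [parseval_ennreal c]
    _ = ∑' j, ∑' i, ((‖(⟪T (b i), c j⟫ : ℂ)‖₊ ^ 2 : ℝ≥0) : ℝ≥0∞) := ENNReal.tsum_comm
    _ = ∑' j, ((‖adjoint T (c j)‖₊ ^ 2 : ℝ≥0) : ℝ≥0∞) := by
        refine tsum_congr fun j => ?_
        simp_rw [key]
        exact parseval_ennreal b _

lemma etsum_congr {ι κ : Type*} (b : HilbertBasis ι ℂ H) (c : HilbertBasis κ ℂ H)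
    (T : H →L[ℂ] H) :
    ∑' i, ((‖T (b i)‖₊ ^ 2 : ℝ≥0) : ℝ≥0∞) = ∑' j, ((‖T (c j)‖₊ ^ 2 : ℝ≥0) : ℝ≥0∞) := by
  rw [etsum_adjoint b c T, ← etsum_adjoint c c T]

lemma summable_iff_etsum {ι : Type*} (b : HilbertBasis ι ℂ H) (T : H →L[ℂ] H) :
    Summable (fun i => ‖T (b i)‖ ^ 2) ↔ (∑' i, ((‖T (b i)‖₊ ^ 2 : ℝ≥0) : ℝ≥0∞)) ≠ ⊤ := by
  have e : (fun i => ((‖T (b i)‖₊ ^ 2 : ℝ≥0) : ℝ)) = fun i => ‖T (b i)‖ ^ 2 := by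
    ext i; push_cast; ring
  rw [ENNReal.tsum_coe_ne_top_iff_summable, ← NNReal.summable_coe, e]

lemma tsum_sq_eq_toReal {ι : Type*} (b : HilbertBasis ι ℂ H) (T : H →L[ℂ] H)
    (h : Summable fun i => ‖T (b i)‖ ^ 2) :
    ∑' i, ‖T (b i)‖ ^ 2 = (∑' i, ((‖T (b i)‖₊ ^ 2 : ℝ≥0) : ℝ≥0∞)).toReal := by
  have e : (fun i => ((‖T (b i)‖₊ ^ 2 : ℝ≥0) : ℝ)) = fun i => ‖T (b i)‖ ^ 2 := by
    ext i; push_cast; ring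
  have hnn : Summable (fun i => (‖T (b i)‖₊ ^ 2 : ℝ≥0)) := by
    rw [← NNReal.summable_coe, e]; exact h
  rw [← ENNReal.coe_tsum hnn, ENNReal.coe_toReal, ← e, NNReal.coe_tsum]

/-- Transfer of square-summability to the adjoint, in the same basis, with equal sums. -/
lemma adjoint_summable {ι : Type*} (b : HilbertBasis ι ℂ H) (T : H →L[ℂ] H)
    (h : Summable fun i => ‖T (b i)‖ ^ 2) :
    Summable (fun i => ‖adjoint T (b i)‖ ^ 2) ∧
      ∑' i, ‖adjoint T (b i)‖ ^ 2 = ∑' i, ‖T (b i)‖ ^ 2 := by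
  have e := etsum_adjoint b b T
  have hfin := (summable_iff_etsum b T).mp h
  have h2 : Summable (fun i => ‖adjoint T (b i)‖ ^ 2) :=
    (summable_iff_etsum b (adjoint T)).mpr (e ▸ hfin)
  exact ⟨h2, by rw [tsum_sq_eq_toReal b _ h2, tsum_sq_eq_toReal b _ h, e]⟩


lemma sqrt_isPositive {T : H →L[ℂ] H} (hT : T.IsPositive) : (CFC.sqrt T).IsPositive :=
  (nonneg_iff_isPositive _).mp (CFC.sqrt_nonneg _)

lemma sqrt_mul_self' {T : H →L[ℂ] H} (hT : T.IsPositive) : CFC.sqrt T * CFC.sqrt T = T :=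
  CFC.sqrt_mul_sqrt_self T ((nonneg_iff_isPositive T).mpr hT)

lemma selfadjoint_inner {R : H →L[ℂ] H} (hR : adjoint R = R) (u v : H) :
    (⟪R u, v⟫ : ℂ) = ⟪u, R v⟫ := by
  conv_lhs => rw [← hR]
  exact adjoint_inner_left _ _ _

lemma inner_eq_normsq {T : H →L[ℂ] H} (hT : T.IsPositive) (x : H) :
    (⟪T x, x⟫ : ℂ) = ((‖CFC.sqrt T x‖ ^ 2 : ℝ) : ℂ) := by
  have hadj : adjoint (CFC.sqrt T) = CFC.sqrt T :=
    ContinuousLinearMap.isSelfAdjoint_iff'.mp (sqrt_isPositive hT).isSelfAdjoint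
  have hsq : CFC.sqrt T * CFC.sqrt T = T := sqrt_mul_self' hT
  calc (⟪T x, x⟫ : ℂ) = ⟪CFC.sqrt T (CFC.sqrt T x), x⟫ := by
        conv_lhs => rw [← hsq]
        rw [ContinuousLinearMap.mul_apply]
    _ = ⟪CFC.sqrt T x, CFC.sqrt T x⟫ := selfadjoint_inner hadj _ _
    _ = ((‖CFC.sqrt T x‖ ^ 2 : ℝ) : ℂ) := by
        rw [inner_self_eq_norm_sq_to_K]; norm_cast

lemma norm_inner_eq_normsq {T : H →L[ℂ] H} (hT : T.IsPositive) (x : H) :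
    ‖(⟪T x, x⟫ : ℂ)‖ = ‖CFC.sqrt T x‖ ^ 2 := by
  rw [inner_eq_normsq hT, Complex.norm_real]
  exact abs_of_nonneg (by positivity)

lemma normsq_mono {T S : H →L[ℂ] H} (hT : T.IsPositive) (hS : S.IsPositive)
    (hTS : (S - T).IsPositive) (x : H) :
    ‖CFC.sqrt T x‖ ^ 2 ≤ ‖CFC.sqrt S x‖ ^ 2 := by
  have h1 := inner_eq_normsq hT x
  have h2 := inner_eq_normsq hS x
  have h3 := inner_eq_normsq hTS x
  have key : ((‖CFC.sqrt S x‖ ^ 2 : ℝ) : ℂ)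
      = ((‖CFC.sqrt T x‖ ^ 2 + ‖CFC.sqrt (S - T) x‖ ^ 2 : ℝ) : ℂ) := by
    rw [← h2, Complex.ofReal_add, ← h1, ← h3]
    simp [ContinuousLinearMap.sub_apply, inner_sub_left]
  have key' : ‖CFC.sqrt S x‖ ^ 2 = ‖CFC.sqrt T x‖ ^ 2 + ‖CFC.sqrt (S - T) x‖ ^ 2 :=
    Complex.ofReal_inj.mp key
  nlinarith [sq_nonneg ‖CFC.sqrt (S - T) x‖]

lemma summable_sqrt_of_traceClass {S : H →L[ℂ] H} (hS : S.IsPositive) (hS₁ : IsTraceClass S)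
    {ι : Type*} (b : HilbertBasis ι ℂ H) :
    Summable fun i => ‖CFC.sqrt S (b i)‖ ^ 2 := by
  obtain ⟨A, B, ⟨wA, bA, hA⟩, ⟨wB, bB, hB⟩, hAB⟩ := hS₁
  have hB' : Summable fun i => ‖B (b i)‖ ^ 2 := by
    rw [summable_iff_etsum b, ← etsum_congr bB b B]
    exact (summable_iff_etsum bB B).mp hB
  have hA' : Summable fun i => ‖adjoint A (b i)‖ ^ 2 := by
    rw [summable_iff_etsum b, ← etsum_adjoint bA b A]
    exact (summable_iff_etsum bA A).mp hA
  refine Summable.of_nonneg_of_le (fun i => by positivity) (fun i => ?_) (hB'.add hA')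
  have h2 : ‖CFC.sqrt S (b i)‖ ^ 2 = ‖(⟪S (b i), b i⟫ : ℂ)‖ := (norm_inner_eq_normsq hS _).symm
  have h3 : (⟪S (b i), b i⟫ : ℂ) = ⟪B (b i), adjoint A (b i)⟫ := by
    rw [hAB]
    exact (adjoint_inner_right A (B (b i)) (b i)).symm
  rw [h2, h3]
  calc ‖(⟪B (b i), adjoint A (b i)⟫ : ℂ)‖ ≤ ‖B (b i)‖ * ‖adjoint A (b i)‖ :=
        norm_inner_le_norm _ _
    _ ≤ ‖B (b i)‖ ^ 2 + ‖adjoint A (b i)‖ ^ 2 := by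
        nlinarith [norm_nonneg (B (b i)), norm_nonneg (adjoint A (b i))]

lemma inner_mul_summable {T : H →L[ℂ] H} (hT : T.IsPositive) {ι : Type*}
    (b : HilbertBasis ι ℂ H) (hsum : Summable fun i => ‖CFC.sqrt T (b i)‖ ^ 2)
    (A : H →L[ℂ] H) :
    Summable (fun i => (⟪A (T (b i)), b i⟫ : ℂ)) ∧
      ‖∑' i, (⟪A (T (b i)), b i⟫ : ℂ)‖ ≤ (1 + ‖A‖ ^ 2) * ∑' i, ‖CFC.sqrt T (b i)‖ ^ 2 := by
  have hRsa : adjoint (CFC.sqrt T) = CFC.sqrt T :=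
    ContinuousLinearMap.isSelfAdjoint_iff'.mp (sqrt_isPositive hT).isSelfAdjoint
  have hsq : CFC.sqrt T * CFC.sqrt T = T := sqrt_mul_self' hT
  have hterm : ∀ i, (⟪A (T (b i)), b i⟫ : ℂ)
      = ⟪CFC.sqrt T (b i), CFC.sqrt T (adjoint A (b i))⟫ := by
    intro i
    calc (⟪A (T (b i)), b i⟫ : ℂ) = ⟪T (b i), adjoint A (b i)⟫ :=
          (adjoint_inner_right A (T (b i)) (b i)).symm
      _ = ⟪CFC.sqrt T (CFC.sqrt T (b i)), adjoint A (b i)⟫ := by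
          conv_lhs => rw [← hsq]
          rw [ContinuousLinearMap.mul_apply]
      _ = ⟪CFC.sqrt T (b i), CFC.sqrt T (adjoint A (b i))⟫ := selfadjoint_inner hRsa _ _
  have hAR : Summable fun i => ‖(A * CFC.sqrt T) (b i)‖ ^ 2 := by
    refine Summable.of_nonneg_of_le (fun i => by positivity) (fun i => ?_)
      (hsum.mul_left (‖A‖ ^ 2))
    have h1 := A.le_opNorm (CFC.sqrt T (b i))
    rw [ContinuousLinearMap.mul_apply]
    nlinarith [norm_nonneg (A (CFC.sqrt T (b i))), norm_nonneg (CFC.sqrt T (b i)),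
      norm_nonneg A]
  obtain ⟨hARadj, hARsum⟩ := adjoint_summable b (A * CFC.sqrt T) hAR
  have hadjAR : ∀ x, adjoint (A * CFC.sqrt T) x = CFC.sqrt T (adjoint A x) := by
    have h : adjoint (A * CFC.sqrt T) = CFC.sqrt T * adjoint A := by
      rw [← star_eq_adjoint, star_mul, (sqrt_isPositive hT).isSelfAdjoint.star_eq, star_eq_adjoint]
    intro x
    rw [h, ContinuousLinearMap.mul_apply]
  have hbound : ∀ i, ‖(⟪A (T (b i)), b i⟫ : ℂ)‖
      ≤ ‖CFC.sqrt T (b i)‖ ^ 2 + ‖adjoint (A * CFC.sqrt T) (b i)‖ ^ 2 := by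
    intro i
    rw [hterm i]
    have e : ‖adjoint (A * CFC.sqrt T) (b i)‖ = ‖CFC.sqrt T (adjoint A (b i))‖ := by
      rw [hadjAR]
    calc ‖(⟪CFC.sqrt T (b i), CFC.sqrt T (adjoint A (b i))⟫ : ℂ)‖
        ≤ ‖CFC.sqrt T (b i)‖ * ‖CFC.sqrt T (adjoint A (b i))‖ := norm_inner_le_norm _ _
      _ ≤ ‖CFC.sqrt T (b i)‖ ^ 2 + ‖adjoint (A * CFC.sqrt T) (b i)‖ ^ 2 := by
          rw [e]
          nlinarith [norm_nonneg (CFC.sqrt T (b i)),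
            norm_nonneg (CFC.sqrt T (adjoint A (b i)))]
  have hgsum : Summable (fun i => ‖CFC.sqrt T (b i)‖ ^ 2
      + ‖adjoint (A * CFC.sqrt T) (b i)‖ ^ 2) := hsum.add hARadj
  have hsummable : Summable (fun i => (⟪A (T (b i)), b i⟫ : ℂ)) :=
    Summable.of_norm_bounded hgsum hbound
  refine ⟨hsummable, ?_⟩
  have hARle : ∑' i, ‖(A * CFC.sqrt T) (b i)‖ ^ 2 ≤ ‖A‖ ^ 2 * ∑' i, ‖CFC.sqrt T (b i)‖ ^ 2 := by
    rw [← tsum_mul_left]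
    refine Summable.tsum_le_tsum (fun i => ?_) hAR (hsum.mul_left _)
    have h1 := A.le_opNorm (CFC.sqrt T (b i))
    rw [ContinuousLinearMap.mul_apply]
    nlinarith [norm_nonneg (A (CFC.sqrt T (b i))), norm_nonneg (CFC.sqrt T (b i)),
      norm_nonneg A]
  calc ‖∑' i, (⟪A (T (b i)), b i⟫ : ℂ)‖
      ≤ ∑' i, (‖CFC.sqrt T (b i)‖ ^ 2 + ‖adjoint (A * CFC.sqrt T) (b i)‖ ^ 2) :=
        tsum_of_norm_bounded hgsum.hasSum hbound
    _ = ∑' i, ‖CFC.sqrt T (b i)‖ ^ 2 + ∑' i, ‖adjoint (A * CFC.sqrt T) (b i)‖ ^ 2 :=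
        Summable.tsum_add hsum hARadj
    _ = ∑' i, ‖CFC.sqrt T (b i)‖ ^ 2 + ∑' i, ‖(A * CFC.sqrt T) (b i)‖ ^ 2 := by rw [hARsum]
    _ ≤ ∑' i, ‖CFC.sqrt T (b i)‖ ^ 2 + ‖A‖ ^ 2 * ∑' i, ‖CFC.sqrt T (b i)‖ ^ 2 := by
        linarith
    _ = (1 + ‖A‖ ^ 2) * ∑' i, ‖CFC.sqrt T (b i)‖ ^ 2 := by ring

end TraceAux

open TraceAux

/-- if `(Sₙ)` increases to a positive trace class operator `S` in the weak
(quadratic form) sense, then each `Sₙ` is trace class, `trace (S - Sₙ) → 0`, and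
`trace (A Sₙ) → trace (A S)` for every bounded `A`. -/
theorem trace_tendsto_of_monotone (S : H →L[ℂ] H) (hS : S.IsPositive) (hS₁ : IsTraceClass S)
    (Sn : ℕ → H →L[ℂ] H) (hpos : ∀ n, (Sn n).IsPositive)
    (hmono : ∀ n, (Sn (n + 1) - Sn n).IsPositive) (hle : ∀ n, (S - Sn n).IsPositive)
    (hconv : ∀ x : H,
      Tendsto (fun n => (inner ℂ (Sn n x) x : ℂ)) atTop (nhds (inner ℂ (S x) x))) :
    (∀ n, IsTraceClass (Sn n)) ∧
      Tendsto (fun n => trace (S - Sn n)) atTop (nhds 0) ∧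
      ∀ A : H →L[ℂ] H,
        Tendsto (fun n => trace (A * Sn n)) atTop (nhds (trace (A * S))) := by
  set b := (exists_hilbertBasis ℂ H).choose_spec.choose with hbdef
  have htr : ∀ T : H →L[ℂ] H, trace T = ∑' i, (inner ℂ (T (b i)) (b i) : ℂ) := fun T => rfl
  have hgS : Summable (fun i => ‖CFC.sqrt S (b i)‖ ^ 2) := summable_sqrt_of_traceClass hS hS₁ b
  have hsum_n : ∀ n, Summable (fun i => ‖CFC.sqrt (Sn n) (b i)‖ ^ 2) := fun n =>
    Summable.of_nonneg_of_le (fun i => by positivity)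
      (fun i => normsq_mono (hpos n) hS (hle n) (b i)) hgS
  have hSmn : ∀ n, (S - (S - Sn n)).IsPositive := fun n => by
    rw [sub_sub_cancel]; exact hpos n
  have hsumT : ∀ n, Summable (fun i => ‖CFC.sqrt (S - Sn n) (b i)‖ ^ 2) := fun n =>
    Summable.of_nonneg_of_le (fun i => by positivity)
      (fun i => normsq_mono (hle n) hS (hSmn n) (b i)) hgS
  have key2 : Tendsto (fun n => ∑' i, (inner ℂ ((S - Sn n) (b i)) (b i) : ℂ)) atTop (nhds 0) := by
    have h0 : (0 : ℂ) = ∑' _i : (exists_hilbertBasis ℂ H).choose, (0 : ℂ) := by simp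
    rw [h0]
    refine tendsto_tsum_of_dominated_convergence hgS (fun i => ?_)
      (Eventually.of_forall fun n i => ?_)
    · have h1 := hconv (b i)
      have h2 : Tendsto (fun n => (inner ℂ (S (b i)) (b i) : ℂ) - inner ℂ (Sn n (b i)) (b i)) atTop
          (nhds ((inner ℂ (S (b i)) (b i) : ℂ) - inner ℂ (S (b i)) (b i))) :=
        tendsto_const_nhds.sub h1
      simpa [ContinuousLinearMap.sub_apply, inner_sub_left] using h2
    · rw [norm_inner_eq_normsq (hle n)]
      exact normsq_mono (hle n) hS (hSmn n) (b i)
  have htrTn : ∀ n, (∑' i, (inner ℂ ((S - Sn n) (b i)) (b i) : ℂ))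
      = ((∑' i, ‖CFC.sqrt (S - Sn n) (b i)‖ ^ 2 : ℝ) : ℂ) := by
    intro n
    rw [tsum_congr (fun i => inner_eq_normsq (hle n) (b i))]
    exact (Complex.hasSum_ofReal.mpr (hsumT n).hasSum).tsum_eq
  have hreal0 : Tendsto (fun n => ∑' i, ‖CFC.sqrt (S - Sn n) (b i)‖ ^ 2) atTop (nhds 0) := by
    have h1 : Tendsto (fun n => ((∑' i, ‖CFC.sqrt (S - Sn n) (b i)‖ ^ 2 : ℝ) : ℂ)) atTop
        (nhds 0) := by
      have := key2
      simp_rw [htrTn] at this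
      exact this
    have h2 := (Complex.continuous_re.tendsto (0 : ℂ)).comp h1
    simpa [Function.comp_def] using h2
  refine ⟨fun n => ⟨CFC.sqrt (Sn n), CFC.sqrt (Sn n), ⟨_, b, hsum_n n⟩, ⟨_, b, hsum_n n⟩,
      (sqrt_mul_self' (hpos n)).symm⟩, ?_, ?_⟩
  · have he : (fun n => trace (S - Sn n))
        = fun n => ∑' i, (inner ℂ ((S - Sn n) (b i)) (b i) : ℂ) := funext fun n => htr _
    rw [he]
    exact key2
  · intro A
    obtain ⟨hsumSA, -⟩ := inner_mul_summable hS b hgS A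
    have hTn := fun n => inner_mul_summable (hle n) b (hsumT n) A
    have hts : ∀ n, trace (A * Sn n)
        = trace (A * S) - ∑' i, (inner ℂ (A ((S - Sn n) (b i))) (b i) : ℂ) := by
      intro n
      have e : ∀ i, (inner ℂ ((A * Sn n) (b i)) (b i) : ℂ)
          = (inner ℂ (A (S (b i))) (b i) : ℂ) - inner ℂ (A ((S - Sn n) (b i))) (b i) := by
        intro i
        rw [ContinuousLinearMap.mul_apply, ← inner_sub_left, ← map_sub]
        congr 2
        simp [ContinuousLinearMap.sub_apply]
      have eS : (∑' i, (inner ℂ ((A * S) (b i)) (b i) : ℂ))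
          = ∑' i, (inner ℂ (A (S (b i))) (b i) : ℂ) :=
        tsum_congr fun i => by rw [ContinuousLinearMap.mul_apply]
      rw [htr (A * Sn n), tsum_congr e, Summable.tsum_sub hsumSA (hTn n).1, htr (A * S), eS]
    rw [tendsto_iff_norm_sub_tendsto_zero]
    refine squeeze_zero (g := fun n =>
        (1 + ‖A‖ ^ 2) * ∑' i, ‖CFC.sqrt (S - Sn n) (b i)‖ ^ 2)
      (fun n => norm_nonneg _) (fun n => ?_) ?_
    · rw [hts n]
      have h3 : trace (A * S) - (∑' i, (inner ℂ (A ((S - Sn n) (b i))) (b i) : ℂ)) - trace (A * S)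
          = -(∑' i, (inner ℂ (A ((S - Sn n) (b i))) (b i) : ℂ)) := by ring
      rw [h3, norm_neg]
      exact (hTn n).2
    · simpa using hreal0.const_mul (1 + ‖A‖ ^ 2)




end
end

section
/- Let H be a complex Hilbert space, T a positive finite rank operator on H, and S a positive bounded operator on H that is T-absolutely continuous, i.e. there is a monotone increasing sequence (Sₙ) of positive operators with Sₙ ≤ cₙT for some constants cₙ ≥ 0 and Sₙ → S in the strong operator topology. Then there exists a constant c ≥ 0 such that S ≤ cT. -/
open scoped ComplexOrder
open Filter Topology

noncomputable section

variable {H : Type*} [NormedAddCommGroup H] [InnerProductSpace ℂ H] [CompleteSpace H]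

/-- If `S` is positive and `re ⟪S x, x⟫ = 0`, then `S x = 0`. -/
lemma apply_eq_zero_of_re_inner_eq_zero {S : H →L[ℂ] H} (hS : S.IsPositive) {x : H}
    (h0 : RCLike.re (inner ℂ (S x) x : ℂ) = 0) : S x = 0 := by
  have hsym : (S : H →ₗ[ℂ] H).IsSymmetric :=
    hS.1
  have hsym' : ∀ u v : H, (inner ℂ (S u) v : ℂ) = inner ℂ u (S v) := fun u v => hsym u v
  have hre : ∀ y : H, RCLike.re (inner ℂ (S x) y : ℂ) = 0 := by
    intro y
    set a : ℝ := RCLike.re (inner ℂ (S x) y : ℂ) with ha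
    set b : ℝ := RCLike.re (inner ℂ (S y) y : ℂ) with hb
    have hbnn : 0 ≤ b := hS.2 y
    have hq : ∀ t : ℝ, 0 ≤ 2 * t * a + t ^ 2 * b := by
      intro t
      have h := hS.2 (x + (t : ℂ) • y)
      rw [ContinuousLinearMap.reApplyInnerSelf_apply] at h
      have e1 : (inner ℂ (S (x + (t:ℂ)•y)) (x + (t:ℂ)•y) : ℂ)
          = inner ℂ (S x) x + (t:ℂ) * inner ℂ (S x) y + (t:ℂ) * inner ℂ (S y) x
            + (t:ℂ)^2 * inner ℂ (S y) y := by
        simp only [map_add, ContinuousLinearMap.map_smul, inner_add_left, inner_add_right,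
          inner_smul_left, inner_smul_right, Complex.conj_ofReal]
        ring
      have e3 : RCLike.re (inner ℂ (S y) x : ℂ) = a := by
        rw [hsym' y x, inner_re_symm, ha]
      rw [e1] at h
      simp only [map_add, RCLike.re_to_complex, Complex.add_re, Complex.mul_re,
        Complex.ofReal_re, Complex.ofReal_im, Complex.sq_norm] at h
      have ht2 : ((t:ℂ)^2).re = t^2 := by
        norm_cast
      have ht2' : ((t:ℂ)^2).im = 0 := by
        norm_cast
      rw [ht2, ht2'] at h
      simp only [RCLike.re_to_complex] at h0 e3 ha hb
      rw [h0, e3, ← ha, ← hb] at h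
      linarith [h]
    have h1 := hq (-(a / (b + 1)))
    have hb1 : (0:ℝ) < b + 1 := by linarith
    have hbne : b + 1 ≠ 0 := ne_of_gt hb1
    have h3 : 0 ≤ (2 * (-(a / (b + 1))) * a + (-(a / (b + 1))) ^ 2 * b) * (b + 1) ^ 2 :=
      mul_nonneg h1 (by positivity)
    have e : (2 * (-(a / (b + 1))) * a + (-(a / (b + 1))) ^ 2 * b) * (b + 1) ^ 2
        = -(a ^ 2) * (b + 2) := by
      field_simp
      ring
    rw [e] at h3
    have ha2 : a ^ 2 ≤ 0 := by nlinarith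
    have ha0 : a ^ 2 = 0 := le_antisymm ha2 (sq_nonneg a)
    exact pow_eq_zero_iff two_ne_zero |>.mp ha0
  have hinner : ∀ y : H, (inner ℂ (S x) y : ℂ) = 0 := by
    intro y
    have h1 : RCLike.re (inner ℂ (S x) y : ℂ) = 0 := hre y
    have h2 : RCLike.re (inner ℂ (S x) ((Complex.I : ℂ) • y) : ℂ) = 0 := hre _
    rw [inner_smul_right] at h2
    apply Complex.ext
    · simpa using h1
    · have h3 : (Complex.I * (inner ℂ (S x) y : ℂ)).re = -(inner ℂ (S x) y : ℂ).im := by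
        simp [Complex.mul_re]
      simp only [RCLike.re_to_complex] at h2
      rw [h3] at h2
      simp only [Complex.zero_im]
      linarith
  have := hinner (S x)
  rwa [inner_self_eq_zero] at this

/-- if `T` is a positive finite rank operator and the positive operator `S` is
`T`-absolutely continuous, then `S ≤ cT` for some constant `c ≥ 0`. -/
theorem dominated_of_absCont_finiteRank (T S : H →L[ℂ] H) (hT : T.IsPositive)
    (hfin : FiniteDimensional ℂ (LinearMap.range (T : H →ₗ[ℂ] H))) (hS : S.IsPositive)
    (hAC : OpAbsCont S T) :
    ∃ c : ℝ, 0 ≤ c ∧ ((c : ℂ) • T - S).IsPositive := by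
  obtain ⟨Sn, cn, hpos, hmono, hdom, hlim⟩ := hAC
  set V : Submodule ℂ H := LinearMap.range (T : H →ₗ[ℂ] H) with hVdef
  have hsymT : ∀ u v : H, (inner ℂ (T u) v : ℂ) = inner ℂ u (T v) := fun u v =>
    hT.1 u v
  have hsymS : ∀ u v : H, (inner ℂ (S u) v : ℂ) = inner ℂ u (S v) := fun u v =>
    hS.1 u v
  -- T vanishes on Vᗮ
  have hTv : ∀ v ∈ Vᗮ, T v = 0 := by
    intro v hv
    have hmem : T (T v) ∈ V := ⟨T v, rfl⟩
    have h1 : (inner ℂ v (T (T v)) : ℂ) = 0 :=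
      (Submodule.mem_orthogonal' V v).mp hv _ hmem
    have h2 : (inner ℂ (T v) (T v) : ℂ) = 0 := by rw [hsymT]; exact h1
    exact inner_self_eq_zero.mp h2
  -- S vanishes on Vᗮ
  have hSv : ∀ v ∈ Vᗮ, S v = 0 := by
    intro v hv
    have hTv0 : T v = 0 := hTv v hv
    have hn : ∀ n, RCLike.re (inner ℂ (Sn n v) v : ℂ) = 0 := by
      intro n
      have h2 := ((hdom n).2).2 v
      rw [ContinuousLinearMap.reApplyInnerSelf_apply] at h2
      simp only [ContinuousLinearMap.sub_apply, ContinuousLinearMap.smul_apply, hTv0,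
        smul_zero, zero_sub, inner_neg_left, map_neg] at h2
      have h3 := (hpos n).2 v
      rw [ContinuousLinearMap.reApplyInnerSelf_apply] at h3
      linarith
    have hc : Continuous fun w : H => RCLike.re (inner ℂ w v : ℂ) :=
      RCLike.continuous_re.comp (Continuous.inner continuous_id continuous_const)
    have hlimv : Tendsto (fun n => RCLike.re (inner ℂ (Sn n v) v : ℂ)) atTop
        (nhds (RCLike.re (inner ℂ (S v) v : ℂ))) := (hc.tendsto (S v)).comp (hlim v)
    have hfun : (fun n => RCLike.re (inner ℂ (Sn n v) v : ℂ)) = fun _ => (0:ℝ) := funext hn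
    rw [hfun] at hlimv
    have h0 : RCLike.re (inner ℂ (S v) v : ℂ) = 0 :=
      (tendsto_nhds_unique hlimv tendsto_const_nhds)
    exact apply_eq_zero_of_re_inner_eq_zero hS h0
  -- norm helper
  have hnorm1 : ∀ (u : H) (hu : u ∈ V), u ≠ 0 →
      ((‖u‖⁻¹ : ℂ) • (⟨u, hu⟩ : V)) ∈ Metric.sphere (0:V) 1 := by
    intro u hu hu0
    have hn0 : ‖u‖ ≠ 0 := norm_ne_zero_iff.mpr hu0
    rw [mem_sphere_zero_iff_norm, norm_smul]
    have h1 : ‖((‖u‖ : ℂ))⁻¹‖ = ‖u‖⁻¹ := by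
      rw [norm_inv, Complex.norm_real, norm_norm]
    have h2 : ‖(⟨u, hu⟩ : V)‖ = ‖u‖ := rfl
    rw [h1, h2, inv_mul_cancel₀ hn0]
  by_cases hV0 : V = ⊥
  · -- T = 0, hence S = 0
    refine ⟨0, le_refl 0, ?_⟩
    have hmem : ∀ x : H, x ∈ Vᗮ := by
      intro x
      rw [hV0, Submodule.bot_orthogonal_eq_top]
      trivial
    have hSeq : S = 0 := ContinuousLinearMap.ext fun x => by
      simpa using hSv x (hmem x)
    rw [hSeq]
    simpa using ContinuousLinearMap.isPositive_zero
  · haveI : FiniteDimensional ℂ V := hfin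
    haveI : CompleteSpace V := FiniteDimensional.complete ℂ V
    obtain ⟨x₀, hx₀V, hx₀0⟩ := Submodule.exists_mem_ne_zero_of_ne_bot hV0
    have hsne : (Metric.sphere (0:V) 1).Nonempty := ⟨_, hnorm1 x₀ hx₀V hx₀0⟩
    have hfc : Continuous fun u : V => T.reApplyInnerSelf (u : H) :=
      T.reApplyInnerSelf_continuous.comp continuous_subtype_val
    obtain ⟨u₀, hu₀mem, hminOn⟩ :=
      (isCompact_sphere (0:V) 1).exists_isMinOn hsne hfc.continuousOn
    set ε := T.reApplyInnerSelf (u₀ : H) with hεdef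
    have hεnn : 0 ≤ ε := hT.2 _
    have hu₀n : ‖(u₀ : H)‖ = 1 := mem_sphere_zero_iff_norm.mp hu₀mem
    have hε : 0 < ε := by
      rcases hεnn.lt_or_eq with h | h
      · exact h
      · exfalso
        have hT0 : T (u₀ : H) = 0 := by
          apply apply_eq_zero_of_re_inner_eq_zero hT
          rw [← ContinuousLinearMap.reApplyInnerSelf_apply, ← hεdef]
          exact h.symm
        obtain ⟨y, hy⟩ := u₀.2
        have h1 : (inner ℂ ((u₀ : V) : H) ((u₀ : V) : H) : ℂ) = 0 := by
          conv_lhs => rw [← hy]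
          rw [hT.1, hy, ContinuousLinearMap.coe_coe, hT0, inner_zero_right]
        have h2 := inner_self_eq_zero.mp h1
        rw [h2] at hu₀n
        simp at hu₀n
    have hscale : ∀ u : H, u ∈ V → ε * ‖u‖ ^ 2 ≤ T.reApplyInnerSelf u := by
      intro u hu
      rcases eq_or_ne u 0 with rfl | hu0
      · simp [ContinuousLinearMap.reApplyInnerSelf]
      · have hn0 : ‖u‖ ≠ 0 := norm_ne_zero_iff.mpr hu0
        have h1 : ε ≤ T.reApplyInnerSelf (((‖u‖ : ℂ))⁻¹ • u) := hminOn (hnorm1 u hu hu0)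
        rw [ContinuousLinearMap.reApplyInnerSelf_smul] at h1
        have h2 : ‖((‖u‖ : ℂ))⁻¹‖ = ‖u‖⁻¹ := by
          rw [norm_inv, Complex.norm_real, norm_norm]
        rw [h2] at h1
        -- h1 : ε ≤ ‖u‖⁻¹ ^ 2 * T.reApplyInnerSelf u
        have hpos2 : (0:ℝ) < ‖u‖ ^ 2 := by positivity
        have := mul_le_mul_of_nonneg_left h1 hpos2.le
        calc ε * ‖u‖ ^ 2 = ‖u‖ ^ 2 * ε := by ring
          _ ≤ ‖u‖ ^ 2 * (‖u‖⁻¹ ^ 2 * T.reApplyInnerSelf u) := this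
          _ = T.reApplyInnerSelf u := by field_simp
    have hSnorm : ∀ u : H, S.reApplyInnerSelf u ≤ ‖S‖ * ‖u‖ ^ 2 := by
      intro u
      rw [ContinuousLinearMap.reApplyInnerSelf_apply]
      calc RCLike.re (inner ℂ (S u) u : ℂ) ≤ ‖(inner ℂ (S u) u : ℂ)‖ := RCLike.re_le_norm _
        _ ≤ ‖S u‖ * ‖u‖ := norm_inner_le_norm _ _
        _ ≤ ‖S‖ * ‖u‖ * ‖u‖ := by
            have := S.le_opNorm u
            have hn := norm_nonneg u
            nlinarith [norm_nonneg (S u)]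
        _ = ‖S‖ * ‖u‖ ^ 2 := by ring
    refine ⟨‖S‖ / ε, div_nonneg (norm_nonneg S) hε.le, ?_, ?_⟩
    · have h1 : IsSelfAdjoint ((↑(‖S‖ / ε) : ℂ) • T) := by
        apply IsSelfAdjoint.smul _ hT.isSelfAdjoint
        exact Complex.conj_ofReal _
      exact (h1.sub hS.isSelfAdjoint).isSymmetric
    · intro x
      obtain ⟨u, hu, v, hv, rfl⟩ := V.exists_add_mem_mem_orthogonal x
      have hTv0 : T v = 0 := hTv v hv
      have hSv0 : S v = 0 := hSv v hv
      have hTinner : RCLike.re (inner ℂ (T (u + v)) (u + v) : ℂ) = T.reApplyInnerSelf u := by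
        rw [map_add, hTv0, add_zero, inner_add_right]
        have h0 : (inner ℂ (T u) v : ℂ) = 0 := by rw [hsymT, hTv0, inner_zero_right]
        rw [h0, add_zero, ContinuousLinearMap.reApplyInnerSelf_apply]
      have hSinner : RCLike.re (inner ℂ (S (u + v)) (u + v) : ℂ) = S.reApplyInnerSelf u := by
        rw [map_add, hSv0, add_zero, inner_add_right]
        have h0 : (inner ℂ (S u) v : ℂ) = 0 := by rw [hsymS, hSv0, inner_zero_right]
        rw [h0, add_zero, ContinuousLinearMap.reApplyInnerSelf_apply]
      rw [ContinuousLinearMap.reApplyInnerSelf_apply]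
      have hexp : (inner ℂ (((↑(‖S‖ / ε) : ℂ) • T - S) (u + v)) (u + v) : ℂ)
          = ((‖S‖ / ε : ℝ) : ℂ) * inner ℂ (T (u + v)) (u + v) - inner ℂ (S (u + v)) (u + v) := by
        simp only [ContinuousLinearMap.sub_apply, ContinuousLinearMap.smul_apply,
          inner_sub_left, inner_smul_left, Complex.conj_ofReal]
      rw [hexp]
      simp only [RCLike.re_to_complex, Complex.sub_re, Complex.re_ofReal_mul]
      have h1 := hscale u hu
      have h2 := hSnorm u
      have hcε : ‖S‖ / ε * ε = ‖S‖ := div_mul_cancel₀ _ hε.ne'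
      have hc0 : 0 ≤ ‖S‖ / ε := div_nonneg (norm_nonneg S) hε.le
      have h3 : ‖S‖ / ε * (ε * ‖u‖ ^ 2) ≤ ‖S‖ / ε * T.reApplyInnerSelf u :=
        mul_le_mul_of_nonneg_left h1 hc0
      simp only [RCLike.re_to_complex] at hTinner hSinner
      rw [hTinner, hSinner]
      have hεne : ε ≠ 0 := hε.ne'
      have h4 : ‖S‖ * ‖u‖ ^ 2 ≤ ‖S‖ / ε * T.reApplyInnerSelf u := by
        calc ‖S‖ * ‖u‖ ^ 2 = ‖S‖ / ε * (ε * ‖u‖ ^ 2) := by field_simp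
          _ ≤ _ := h3
      linarith [h2, h4]

end
end
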